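/- Let q = 2^m with m ≥ 3, and let β range over F_q \ F_2. For u = diag(β,1,β^{-1}) ∈ SU_3(F_q), the trace of the image of u under the 8-dimensional adjoint representation (on traceless matrices, modulo center) equals (β + β^{-1})^2, and these traces take at least (q-2)/2 > (q-1)/3 distinct nonzero values in F_q. -/

import Mathlib

/-- The adjoint (conjugation) action `x ↦ u x u⁻¹` on `3 × 3` matrices, as a linear
map. -/
noncomputable def adjAction {K : Type*} [Field K] (u : Matrix (Fin 3) (Fin 3) K) :
    Matrix (Fin 3) (Fin 3) K →ₗ[K] Matrix (Fin 3) (Fin 3) K :=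
  (LinearMap.mulLeft K u).comp (LinearMap.mulRight K u⁻¹)


private lemma stdBasis_repr' {R : Type*} [Semiring R] (x : Matrix (Fin 3) (Fin 3) R)
    (p : Fin 3 × Fin 3) :
    (Matrix.stdBasis R (Fin 3) (Fin 3)).repr x p = x p.1 p.2 := by
  simp [Matrix.stdBasis, Module.Basis.repr_reindex]

private lemma key_entry {K : Type*} [Field K] (a b : Matrix (Fin 3) (Fin 3) K) (i j : Fin 3) :
    (a * (Matrix.single i j 1 * b) : Matrix (Fin 3) (Fin 3) K) i j = a i i * b j j := by
  simp [Matrix.mul_apply, Matrix.single, Matrix.of_apply, mul_ite, ite_mul, ite_and,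
    Finset.sum_ite_eq, Finset.sum_ite_eq']

private lemma trace_mulLeft_mulRight {K : Type*} [Field K] (a b : Matrix (Fin 3) (Fin 3) K) :
    LinearMap.trace K _ ((LinearMap.mulLeft K a).comp (LinearMap.mulRight K b)) =
      a.trace * b.trace := by
  rw [LinearMap.trace_eq_matrix_trace K (Matrix.stdBasis K (Fin 3) (Fin 3))]
  rw [Matrix.trace]
  simp only [Matrix.diag_apply, LinearMap.toMatrix_apply, LinearMap.comp_apply,
    LinearMap.mulLeft_apply, LinearMap.mulRight_apply, stdBasis_repr']
  rw [Fintype.sum_prod_type, Matrix.trace, Matrix.trace, Finset.sum_mul]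
  refine Finset.sum_congr rfl fun i _ => ?_
  rw [Finset.mul_sum]
  refine Finset.sum_congr rfl fun j _ => ?_
  rw [Matrix.stdBasis_eq_single]
  exact key_entry a b i j

private lemma trace_restrict_eq {K : Type*} [Field K] (h2 : (2:K) = 0)
    (u : Matrix (Fin 3) (Fin 3) K) (hu : u * u⁻¹ = 1)
    (hW : ∀ x ∈ LinearMap.ker (Matrix.traceLinearMap (Fin 3) K K),
        adjAction u x ∈ LinearMap.ker (Matrix.traceLinearMap (Fin 3) K K)) :
    LinearMap.trace K _ ((adjAction u).restrict hW) = u.trace * (u⁻¹).trace - 1 := by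
  have h3 : (3:K) = 1 := by linear_combination h2
  set W := LinearMap.ker (Matrix.traceLinearMap (Fin 3) K K) with hWdef
  set L := Submodule.span K {(1 : Matrix (Fin 3) (Fin 3) K)} with hLdef
  have htr1 : (1 : Matrix (Fin 3) (Fin 3) K).trace = 1 := by
    rw [Matrix.trace_one]; simpa using h3
  have hL : ∀ x ∈ L, adjAction u x ∈ L := by
    intro x hx
    obtain ⟨a, rfl⟩ := Submodule.mem_span_singleton.mp hx
    have : adjAction u (a • (1 : Matrix (Fin 3) (Fin 3) K)) = a • 1 := by
      simp [adjAction, smul_mul_assoc, mul_smul_comm, hu]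
    rw [this]
    exact Submodule.smul_mem _ _ (Submodule.mem_span_singleton_self _)
  have hcompl : IsCompl W L := by
    constructor
    · rw [disjoint_iff_inf_le]
      rintro x ⟨hxW, hxL⟩
      obtain ⟨a, rfl⟩ := Submodule.mem_span_singleton.mp hxL
      have : (a • (1 : Matrix (Fin 3) (Fin 3) K)).trace = 0 := hxW
      rw [Matrix.trace_smul, htr1, smul_eq_mul, mul_one] at this
      simp [this]
    · rw [codisjoint_iff, eq_top_iff]
      rintro x -
      refine Submodule.mem_sup.mpr ⟨x - x.trace • 1, ?_, x.trace • 1,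
        Submodule.smul_mem _ _ (Submodule.mem_span_singleton_self _), sub_add_cancel x _⟩
      show (x - x.trace • (1:Matrix (Fin 3) (Fin 3) K)).trace = 0
      rw [Matrix.trace_sub, Matrix.trace_smul, htr1, smul_eq_mul, mul_one, sub_self]
  have hInt : DirectSum.IsInternal ![W, L] := by
    rw [DirectSum.isInternal_submodule_iff_isCompl ![W, L] (i := 0) (j := 1) (by decide)
      (by ext x; fin_cases x <;> simp)]
    exact hcompl
  have hf : ∀ i, Set.MapsTo (adjAction u) (![W, L] i) (![W, L] i) := by
    intro i
    fin_cases i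
    · exact hW
    · exact hL
  have hsum := LinearMap.trace_eq_sum_trace_restrict hInt hf
  rw [Fin.sum_univ_two] at hsum
  have hfull : LinearMap.trace K _ (adjAction u) = u.trace * (u⁻¹).trace :=
    trace_mulLeft_mulRight u u⁻¹
  have hLtr : LinearMap.trace K _ ((adjAction u).restrict (hf 1)) = 1 := by
    have hid : (adjAction u).restrict (hf 1) = LinearMap.id := by
      refine LinearMap.ext fun x => Subtype.ext ?_
      show adjAction u x.1 = x.1
      obtain ⟨a, ha⟩ := Submodule.mem_span_singleton.mp x.2
      rw [← ha]
      simp [adjAction, smul_mul_assoc, mul_smul_comm, hu]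
    rw [hid, LinearMap.trace_id,
      show Module.finrank K ↥(![W, L] 1) = 1 from finrank_span_singleton one_ne_zero]
    norm_num
  have heq : LinearMap.trace K _ ((adjAction u).restrict hW) =
      LinearMap.trace K _ ((adjAction u).restrict (hf 0)) := rfl
  rw [heq]
  rw [hfull, hLtr] at hsum
  linear_combination -hsum

private lemma two_to_one {K : Type*} [Field K] (h2 : (2:K) = 0) {β γ : K} (hβ : β ≠ 0)
    (hγ : γ ≠ 0) (h : (γ + γ⁻¹) ^ 2 = (β + β⁻¹) ^ 2) : γ = β ∨ γ = β⁻¹ := by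
  have hsq : γ + γ⁻¹ = β + β⁻¹ := by
    have : ((γ + γ⁻¹) - (β + β⁻¹)) ^ 2 = 0 := by
      linear_combination h + ((β + β⁻¹) * (β + β⁻¹) - (γ + γ⁻¹) * (β + β⁻¹)) * h2
    have := pow_eq_zero_iff (n := 2) (by norm_num) |>.mp this
    linear_combination this
  have hb : β * β⁻¹ = 1 := mul_inv_cancel₀ hβ
  have hg : γ * γ⁻¹ = 1 := mul_inv_cancel₀ hγ
  have h5 : (γ - β) * (γ * β - 1) = 0 := by
    linear_combination (γ * β) * hsq - β * hg + γ * hb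
  rcases mul_eq_zero.mp h5 with h6 | h6
  · exact Or.inl (by linear_combination h6)
  · exact Or.inr (eq_inv_of_mul_eq_one_left (by linear_combination h6))


/-- Let `q = 2^m` with `m ≥ 3`, and let `β` range over `F_q \ F_2` inside the field
`K` with `q²` elements.  For `u = diag(β,1,β⁻¹) ∈ SU₃(F_q)`, the trace of the image of
`u` under the 8-dimensional adjoint representation (conjugation on traceless matrices)
equals `(β + β⁻¹)²`, and these traces take at least `(q-2)/2 > (q-1)/3` distinct
nonzero values in `F_q`. -/
theorem adjoint_traces_of_diagonal (m : ℕ) (hm : 3 ≤ m) (K : Type*) [Field K]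
    [Fintype K] (hK : Fintype.card K = 2 ^ (2 * m)) :
    (∀ β : K, β ^ 2 ^ m = β → β ≠ 0 → β ≠ 1 →
      ∀ hW : ∀ x ∈ LinearMap.ker (Matrix.traceLinearMap (Fin 3) K K),
          adjAction (Matrix.diagonal ![β, 1, β⁻¹]) x ∈
            LinearMap.ker (Matrix.traceLinearMap (Fin 3) K K),
        LinearMap.trace K _ ((adjAction (Matrix.diagonal ![β, 1, β⁻¹])).restrict hW) =
          (β + β⁻¹) ^ 2) ∧
    (2 ^ m - 2) / 2 ≤
      Nat.card {t : K | ∃ β : K, β ^ 2 ^ m = β ∧ β ≠ 0 ∧ β ≠ 1 ∧ t = (β + β⁻¹) ^ 2} ∧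
    2 ^ m - 1 < 3 * ((2 ^ m - 2) / 2) ∧
    ∀ t ∈ {t : K | ∃ β : K, β ^ 2 ^ m = β ∧ β ≠ 0 ∧ β ≠ 1 ∧ t = (β + β⁻¹) ^ 2},
      t ≠ 0 := by
  classical
  have h8 : 8 ≤ 2 ^ m := by
    calc (8:ℕ) = 2 ^ 3 := rfl
    _ ≤ 2 ^ m := Nat.pow_le_pow_right (by norm_num) hm
  have h2 : (2:K) = 0 := by
    have hc := FiniteField.cast_card_eq_zero K
    rw [hK] at hc
    push_cast at hc
    exact pow_eq_zero_iff (by omega) |>.mp hc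
  refine ⟨?_, ?_, ?_, ?_⟩
  · -- trace computation
    intro β hβq hβ0 hβ1 hW
    set u := Matrix.diagonal ![β, 1, β⁻¹] with hudef
    have huv : u * Matrix.diagonal ![β⁻¹, 1, β] = 1 := by
      rw [hudef, Matrix.diagonal_mul_diagonal]
      ext i j
      fin_cases i <;> fin_cases j <;>
        simp [mul_inv_cancel₀ hβ0, inv_mul_cancel₀ hβ0, Matrix.one_apply]
    have hinv : u⁻¹ = Matrix.diagonal ![β⁻¹, 1, β] := Matrix.inv_eq_right_inv huv
    have hu : u * u⁻¹ = 1 := by rw [hinv]; exact huv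
    rw [trace_restrict_eq h2 u hu hW, hinv, Matrix.trace_diagonal, Matrix.trace_diagonal,
      Fin.sum_univ_three, Fin.sum_univ_three]
    simp only [Matrix.cons_val_zero, Matrix.cons_val_one, Matrix.head_cons,
      Matrix.cons_val_two, Matrix.tail_cons]
    linear_combination (β + β⁻¹) * h2
  · -- cardinality bound
    obtain ⟨g, hg⟩ := IsCyclic.exists_ofOrder_eq_natCard (α := Kˣ)
    have hcard : Nat.card Kˣ = 2 ^ (2 * m) - 1 := by
      rw [Nat.card_eq_fintype_card, Fintype.card_units, hK]
    have hqq : 2 ^ (2 * m) - 1 = (2 ^ m - 1) * (2 ^ m + 1) := by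
      have h1 : 2 ^ (2 * m) = 2 ^ m * 2 ^ m := by rw [two_mul, pow_add]
      have h2' : (2 ^ m - 1) * (2 ^ m + 1) + 1 = 2 ^ m * 2 ^ m := by
        obtain ⟨y, hy⟩ : ∃ y, 2 ^ m = y + 1 := ⟨2 ^ m - 1, by omega⟩
        rw [hy]
        simp only [Nat.add_sub_cancel]
        ring
      omega
    have hord : orderOf (g ^ (2 ^ m + 1)) = 2 ^ m - 1 := by
      rw [orderOf_pow, hg, hcard, hqq, Nat.gcd_eq_right ⟨2 ^ m - 1, by ring⟩,
        Nat.mul_div_cancel _ (by positivity)]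
    have hζ : IsPrimitiveRoot ((g ^ (2 ^ m + 1) : Kˣ) : K) (2 ^ m - 1) := by
      rw [IsPrimitiveRoot.coe_units_iff, ← hord]
      exact IsPrimitiveRoot.orderOf _
    have hn0 : 0 < 2 ^ m - 1 := by omega
    set B : Finset K := (Polynomial.nthRootsFinset (2 ^ m - 1) (1 : K)).erase 1 with hBdef
    have hBcard : B.card = 2 ^ m - 2 := by
      rw [hBdef, Finset.card_erase_of_mem (Polynomial.one_mem_nthRootsFinset hn0),
        hζ.card_nthRootsFinset]
      omega
    have hmemB : ∀ β ∈ B, β ^ 2 ^ m = β ∧ β ≠ 0 ∧ β ≠ 1 := by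
      intro β hβ
      have hβ0 := Polynomial.ne_zero_of_mem_nthRootsFinset one_ne_zero (Finset.mem_of_mem_erase hβ)
      have hβ1 : β ≠ 1 := Finset.ne_of_mem_erase hβ
      have hroot : β ^ (2 ^ m - 1) = 1 :=
        (Polynomial.mem_nthRootsFinset hn0 (1 : K)).mp (Finset.mem_of_mem_erase hβ)
      refine ⟨?_, hβ0, hβ1⟩
      calc β ^ 2 ^ m = β ^ (2 ^ m - 1) * β := by rw [← pow_succ]; congr 1; omega
      _ = β := by rw [hroot, one_mul]
    set f : K → K := fun β => (β + β⁻¹) ^ 2 with hfdef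
    have hfib : B.card ≤ 2 * (B.image f).card := by
      refine Finset.card_le_mul_card_image B 2 fun t ht => ?_
      obtain ⟨β₀, hβ₀B, hβ₀⟩ := Finset.mem_image.mp ht
      have hsub : {a ∈ B | f a = t} ⊆ {β₀, β₀⁻¹} := by
        intro γ hγ
        obtain ⟨hγB, hγt⟩ := Finset.mem_filter.mp hγ
        have := two_to_one h2 (hmemB β₀ hβ₀B).2.1 (hmemB γ hγB).2.1
          (by rw [show (γ + γ⁻¹)^2 = f γ from rfl, hγt, ← hβ₀])
        simp only [Finset.mem_insert, Finset.mem_singleton]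
        tauto
      calc {a ∈ B | f a = t}.card ≤ ({β₀, β₀⁻¹} : Finset K).card := Finset.card_le_card hsub
      _ ≤ 2 := le_trans (Finset.card_insert_le _ _) (by simp)
    have himg : ((B.image f : Finset K) : Set K) ⊆
        {t : K | ∃ β : K, β ^ 2 ^ m = β ∧ β ≠ 0 ∧ β ≠ 1 ∧ t = (β + β⁻¹) ^ 2} := by
      intro t ht
      obtain ⟨β, hβ, rfl⟩ := Finset.mem_image.mp ht
      obtain ⟨ha, hb, hc⟩ := hmemB β hβ
      exact ⟨β, ha, hb, hc, rfl⟩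
    have hcardS : (B.image f).card ≤
        Nat.card {t : K | ∃ β : K, β ^ 2 ^ m = β ∧ β ≠ 0 ∧ β ≠ 1 ∧ t = (β + β⁻¹) ^ 2} := by
      rw [Nat.card_coe_set_eq]
      calc (B.image f).card = ((B.image f : Finset K) : Set K).ncard :=
          (Set.ncard_coe_finset _).symm
      _ ≤ _ := Set.ncard_le_ncard himg (Set.toFinite _)
    omega
  · -- arithmetic
    have hll : 2 ^ m = 2 * 2 ^ (m - 1) := by
      rw [← pow_succ']; congr 1; omega
    have h4 : 4 ≤ 2 ^ (m - 1) := by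
      calc (4:ℕ) = 2 ^ 2 := rfl
      _ ≤ 2 ^ (m - 1) := Nat.pow_le_pow_right (by norm_num) (by omega)
    omega
  · -- nonzero
    rintro t ⟨β, hβq, hβ0, hβ1, rfl⟩ h0
    have hs : β + β⁻¹ = 0 := pow_eq_zero_iff (two_ne_zero) |>.mp h0
    have hβinv : β * β⁻¹ = 1 := mul_inv_cancel₀ hβ0
    have hsq : (β - 1) ^ 2 = 0 := by linear_combination β * hs - hβinv - β * h2
    exact hβ1 (by linear_combination pow_eq_zero_iff (two_ne_zero) |>.mp hsq)
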